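/- Let E⁺, E⁻, E_em, E_ov be real numbers satisfying E⁺ < E_em < E⁻ and E_em < E⁺ + E_ov. Then for all natural numbers n, m, k with 1 ≤ m ≤ n and 0 ≤ k < n, we have m·E⁺ + (n−m)·E_em < k·E⁺ + max(k−m,0)·E_ov + (n−k)·E⁻. -/
import Mathlib

theorem stmt_5 (Ep En Eem Eov : ℝ) (h1 : Ep < Eem) (h2 : Eem < En) (h3 : Eem < Ep + Eov) :
    ∀ n m k : ℕ, 1 ≤ m → m ≤ n → k < n →
      (m : ℝ) * Ep + ((n : ℝ) - (m : ℝ)) * Eem <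
        (k : ℝ) * Ep + max ((k : ℝ) - (m : ℝ)) 0 * Eov + ((n : ℝ) - (k : ℝ)) * En := by
  intro n m k hm hmn hkn
  have hk : (k:ℝ) < n := by exact_mod_cast hkn
  have hmn' : (m:ℝ) ≤ n := by exact_mod_cast hmn
  rcases le_total ((k:ℝ) - m) 0 with h | h
  · rw [max_eq_right h]
    nlinarith [mul_nonneg (by linarith : (0:ℝ) ≤ (m:ℝ) - k) (by linarith : (0:ℝ) ≤ En - Ep),
      mul_nonneg (by linarith : (0:ℝ) ≤ (n:ℝ) - m) (by linarith : (0:ℝ) ≤ En - Eem)]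
  · rw [max_eq_left h]
    nlinarith [mul_nonneg h (by linarith : (0:ℝ) ≤ Ep + Eov - Eem),
      mul_pos (by linarith : (0:ℝ) < (n:ℝ) - k) (by linarith : (0:ℝ) < En - Eem)]
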